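/- Suppose every database can be made consistent by a finite sequence of repairing operations (realizability). If an inconsistency measure satisfies positivity and δ-continuity for some δ ≥ 1, then it satisfies progression. -/
import Mathlib

private lemma exists_decrease {DB : Type*} (O : Set (DB → DB)) (I : DB → ℝ) :
    ∀ (l : List (DB → DB)) (D : DB), (∀ o ∈ l, o ∈ O) →
      I (l.foldl (fun D' o => o D') D) < I D →
      ∃ D' : DB, ∃ o ∈ O, I (o D') < I D' := by
  intro l
  induction l with
  | nil => intro D _ h; simp at h
  | cons o t ih =>
    intro D hmem h
    by_cases hc : I (o D) < I D
    · exact ⟨D, o, hmem o (by simp), hc⟩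
    · apply ih (o D) (fun x hx => hmem x (by simp [hx]))
      calc I ((t.foldl (fun D' o => o D') (o D))) < I D := by simpa using h
        _ ≤ I (o D) := not_lt.mp hc

/-- If every database can be made consistent by a finite sequence of repairing operations
(realizability), and the inconsistency measure satisfies positivity and δ-continuity for
some δ ≥ 1, then it satisfies progression. -/
theorem positivity_continuity_implies_progression {DB : Type*} (O : Set (DB → DB))
    (sat : DB → Prop) (I : DB → ℝ)
    (hnonneg : ∀ D, 0 ≤ I D)
    (hzero : ∀ D, sat D → I D = 0)
    (hreal : ∀ D : DB, ∃ l : List (DB → DB), (∀ o ∈ l, o ∈ O) ∧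
      sat (l.foldl (fun D' o => o D') D))
    (δ : ℝ) (hδ : 1 ≤ δ)
    (hcont : ∀ D₁ D₂ : DB, ∀ o₁ ∈ O, ∃ o₂ ∈ O,
      (I D₁ - I (o₁ D₁)) / δ ≤ I D₂ - I (o₂ D₂))
    (hpos : ∀ D, ¬ sat D → 0 < I D) :
    ∀ D, ¬ sat D → ∃ o ∈ O, I (o D) < I D := by
  intro D hD
  obtain ⟨l, hl, hsat⟩ := hreal D
  have hfin : I (l.foldl (fun D' o => o D') D) = 0 := hzero _ hsat
  have hlt : I (l.foldl (fun D' o => o D') D) < I D := by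
    rw [hfin]; exact hpos D hD
  obtain ⟨D', o₁, ho₁, hdec⟩ := exists_decrease O I l D hl hlt
  obtain ⟨o₂, ho₂, hle⟩ := hcont D' D o₁ ho₁
  refine ⟨o₂, ho₂, ?_⟩
  have hδ0 : (0:ℝ) < δ := lt_of_lt_of_le one_pos hδ
  have : 0 < (I D' - I (o₁ D')) / δ := div_pos (by linarith) hδ0
  linarith
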